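/- For n ≥ 2, writing n - 1 = 4q + r with 0 ≤ r < 4, there exists an n-vertex graph with exactly 10q + (r+1 choose 2) edges containing no cycle of length congruent to 2 modulo 4. -/

import Mathlib

open Finset SimpleGraph

namespace Stmt12

def myG (n : ℕ) : SimpleGraph (Fin n) where
  Adj v w := v ≠ w ∧ (v.val = 0 ∨ w.val = 0 ∨ (v.val - 1) / 4 = (w.val - 1) / 4)
  symm := ⟨by intro v w h; exact ⟨h.1.symm, by tauto⟩⟩
  loopless := ⟨by intro v h; exact h.1 rfl⟩

lemma adj_iff {n : ℕ} (v w : Fin n) :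
    (myG n).Adj v w ↔ v ≠ w ∧ (v.val = 0 ∨ w.val = 0 ∨ (v.val - 1) / 4 = (w.val - 1) / 4) :=
  Iff.rfl

instance (n : ℕ) : DecidableRel (myG n).Adj := fun v w =>
  decidable_of_iff _ (adj_iff v w).symm

/-! ### Counting edges -/

lemma card_filter_fin (n : ℕ) (P : Fin n → Prop) [DecidablePred P] (Q : ℕ → Prop)
    [DecidablePred Q] (h : ∀ v : Fin n, P v ↔ Q v.val) :
    (univ.filter P).card = ((range n).filter Q).card := by
  apply Finset.card_bij (fun v _ => v.val)
  · intro a ha; simp only [mem_filter, mem_range] at *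
    exact ⟨a.isLt, (h a).1 ha.2⟩
  · intro a _ b _ hab; exact Fin.val_injective hab
  · intro b hb; simp only [mem_filter, mem_range] at hb
    exact ⟨⟨b, hb.1⟩, by simp [mem_filter, (h ⟨b, hb.1⟩)]; exact hb.2, rfl⟩

/-- the degree of vertex `a` as a function on `ℕ` values -/
def D (m a : ℕ) : ℕ :=
  ((range (m+1)).filter (fun b => a ≠ b ∧ (a = 0 ∨ b = 0 ∨ (a-1)/4 = (b-1)/4))).card

lemma D_zero (m : ℕ) : D m 0 = m := by
  unfold D
  have : (range (m+1)).filter (fun b => 0 ≠ b ∧ (0 = 0 ∨ b = 0 ∨ (0-1)/4 = (b-1)/4))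
      = Ico 1 (m+1) := by
    ext b; simp only [mem_filter, mem_range, mem_Ico]
    constructor
    · rintro ⟨h1, h2, -⟩; omega
    · intro h; exact ⟨by omega, by omega, Or.inl trivial⟩
  rw [this, Nat.card_Ico]; omega

lemma D_succ_lt (q r s : ℕ) (hr : r < 4) (hs : s < 4*q + r) (hk : s/4 < q) :
    D (4*q + r) (s+1) = 4 := by
  unfold D
  have : (range (4*q+r+1)).filter
        (fun b => s+1 ≠ b ∧ (s+1 = 0 ∨ b = 0 ∨ (s+1-1)/4 = (b-1)/4))
      = insert 0 ((Ico (4*(s/4)+1) (4*(s/4)+5)).erase (s+1)) := by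
    ext b
    simp only [mem_filter, mem_range, mem_insert, mem_erase, mem_Ico]
    omega
  rw [this, Finset.card_insert_of_notMem (by simp),
    Finset.card_erase_of_mem (by simp [mem_Ico]; omega), Nat.card_Ico]
  omega

lemma D_succ_ge (q r s : ℕ) (hr : r < 4) (hs : s < 4*q + r) (hk : ¬ s/4 < q) :
    D (4*q + r) (s+1) = r := by
  unfold D
  have hq : s/4 = q := by omega
  have : (range (4*q+r+1)).filter
        (fun b => s+1 ≠ b ∧ (s+1 = 0 ∨ b = 0 ∨ (s+1-1)/4 = (b-1)/4))
      = insert 0 ((Ico (4*q+1) (4*q+r+1)).erase (s+1)) := by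
    ext b
    simp only [mem_filter, mem_range, mem_insert, mem_erase, mem_Ico]
    omega
  rw [this, Finset.card_insert_of_notMem (by simp),
    Finset.card_erase_of_mem (by simp [mem_Ico]; omega), Nat.card_Ico]
  omega

lemma sum_split (q r : ℕ) (f : ℕ → ℕ) (h1 : ∀ s < 4*q, f s = 4)
    (h2 : ∀ s, 4*q ≤ s → s < 4*q+r → f s = r) :
    ∑ s ∈ range (4*q + r), f s = 16*q + r*r := by
  rw [range_eq_Ico, ← Finset.sum_Ico_consecutive f (by omega : 0 ≤ 4*q) (by omega : 4*q ≤ 4*q+r)]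
  have e1 : ∑ s ∈ Ico 0 (4*q), f s = 16*q := by
    rw [Finset.sum_congr rfl (fun s hs => h1 s (by simp [mem_Ico] at hs; omega))]
    simp [Nat.card_Ico]; ring
  have e2 : ∑ s ∈ Ico (4*q) (4*q+r), f s = r*r := by
    rw [Finset.sum_congr rfl (fun s hs => by simp [mem_Ico] at hs; exact h2 s hs.1 hs.2)]
    simp [Nat.card_Ico]
  rw [e1, e2]

lemma degree_eq (n : ℕ) (hn : 1 ≤ n) (v : Fin n) :
    (myG n).degree v = D (n-1) v.val := by
  rw [SimpleGraph.degree, neighborFinset_eq_filter]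
  have hm : n - 1 + 1 = n := by omega
  unfold D
  rw [hm]
  apply card_filter_fin n _ (fun b => v.val ≠ b ∧ (v.val = 0 ∨ b = 0 ∨ (v.val-1)/4 = (b-1)/4))
  intro w
  rw [adj_iff]
  constructor
  · rintro ⟨h1, h2⟩; exact ⟨fun he => h1 (Fin.val_injective he), h2⟩
  · rintro ⟨h1, h2⟩; exact ⟨fun he => h1 (by rw [he]), h2⟩

lemma twice_card (n q r : ℕ) (hn : 2 ≤ n) (hqr : n - 1 = 4 * q + r) (hr : r < 4) :
    2 * (myG n).edgeFinset.card = 20*q + r + r*r := by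
  rw [← SimpleGraph.sum_degrees_eq_twice_card_edges]
  have h1 : ∀ v : Fin n, (myG n).degree v = D (n-1) v.val :=
    degree_eq n (by omega)
  calc ∑ v, (myG n).degree v = ∑ v : Fin n, D (n-1) v.val := by
        exact Finset.sum_congr rfl (fun v _ => h1 v)
    _ = ∑ i ∈ range n, D (n-1) i := Fin.sum_univ_eq_sum_range _ n
    _ = 20*q + r + r*r := by
        have hn' : n = (4*q+r) + 1 := by omega
        rw [hn', Nat.add_sub_cancel]
        rw [Finset.sum_range_succ']
        rw [D_zero]
        have : ∑ s ∈ range (4*q+r), D (4*q+r) (s+1) = 16*q + r*r := by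
          apply sum_split
          · intro s hs
            exact D_succ_lt q r s hr (by omega) (by omega)
          · intro s hs1 hs2
            exact D_succ_ge q r s hr hs2 (by omega)
        rw [this]
        ring

/-! ### No cycles of length ≡ 2 mod 4 -/

lemma adj_group {n : ℕ} {v w : Fin n} (h : (myG n).Adj v w) (hv : v.val ≠ 0) (hw : w.val ≠ 0) :
    (v.val - 1) / 4 = (w.val - 1) / 4 := by
  rcases h.2 with h | h | h
  · exact absurd h hv
  · exact absurd h hw
  · exact h

lemma chain1 {n : ℕ} : ∀ {a b : Fin n} (p : (myG n).Walk a b),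
    (∀ w ∈ p.support, w.val ≠ 0) → ∀ w ∈ p.support, (w.val - 1) / 4 = (a.val - 1) / 4 := by
  intro a b p
  induction p with
  | nil => intro _ w hw; simp at hw; subst hw; rfl
  | @cons u x y h p ih =>
    intro h0 w hw
    have hu : u.val ≠ 0 := h0 u (by simp)
    have hx : x.val ≠ 0 := h0 x (by simp)
    rw [Walk.support_cons] at hw
    rcases List.mem_cons.1 hw with rfl | hw
    · rfl
    · rw [ih (fun w hw => h0 w (by simp [hw])) w hw, adj_group h hu hx]

lemma loop_nil {n : ℕ} {v : Fin n} (p : (myG n).Walk v v) (h : p.support.Nodup) :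
    p = Walk.nil :=
  (Walk.isPath_iff_eq_nil (p := p)).1 (Walk.IsPath.mk' h)

lemma chain2 {n : ℕ} : ∀ {a b : Fin n} (p : (myG n).Walk a b), b.val = 0 →
    p.support.Nodup → a.val ≠ 0 →
    ∀ w ∈ p.support, w.val ≠ 0 → (w.val - 1) / 4 = (a.val - 1) / 4 := by
  intro a b p
  induction p with
  | nil => intro hb _ ha; exact absurd hb ha
  | @cons u x y h p ih =>
    intro hb hnd ha w hw hw0
    rw [Walk.support_cons] at hw hnd
    rcases List.mem_cons.1 hw with rfl | hw
    · rfl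
    · by_cases hx : x.val = 0
      · have hxy : x = y := Fin.val_injective (hx.trans hb.symm)
        subst hxy
        have := loop_nil p (List.nodup_cons.1 hnd).2
        subst this
        simp at hw; subst hw; exact absurd hx hw0
      · rw [ih hb (List.nodup_cons.1 hnd).2 hx w hw hw0, adj_group h ha hx]

lemma card_group {n k : ℕ} :
    (univ.filter (fun w : Fin n => w.val ≠ 0 ∧ (w.val - 1) / 4 = k)).card ≤ 4 := by
  have : (univ.filter (fun w : Fin n => w.val ≠ 0 ∧ (w.val - 1) / 4 = k)).card
      ≤ (range 4).card := by
    apply Finset.card_le_card_of_injOn (fun w => (w.val - 1) % 4)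
    · intro w hw; simp only [coe_filter, Set.mem_setOf_eq, mem_univ, true_and] at hw; simp [mem_range]; omega
    · intro w1 h1 w2 h2 he
      simp only [coe_filter, Set.mem_setOf_eq, mem_univ, true_and] at h1 h2
      have he' : (w1.val - 1) % 4 = (w2.val - 1) % 4 := he
      apply Fin.val_injective
      omega
  simpa using this

lemma list_len_bound {n : ℕ} (l : List (Fin n)) (hnd : l.Nodup) (S : Finset (Fin n))
    (h : ∀ w ∈ l, w ∈ S) : l.length ≤ S.card := by
  rw [← List.toFinset_card_of_nodup hnd]
  exact Finset.card_le_card (fun w hw => h w (List.mem_toFinset.1 hw))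

lemma cycle_len {n : ℕ} {v : Fin n} (c : (myG n).Walk v v) (hc : c.IsCycle) :
    c.length ≤ 5 := by
  by_cases h0 : ∀ w ∈ c.support, w.val ≠ 0
  · have hb := list_len_bound c.support.tail hc.support_nodup
      (univ.filter (fun w : Fin n => w.val ≠ 0 ∧ (w.val - 1) / 4 = (v.val - 1) / 4))
      (by
        intro w hw
        have hws := List.mem_of_mem_tail hw
        simp only [mem_filter, mem_univ, true_and]
        exact ⟨h0 w hws, chain1 c h0 w hws⟩)
    have h4 := card_group (n := n) (k := (v.val - 1) / 4)
    have hl : c.support.tail.length = c.length := by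
      have := c.length_support
      have : c.support.tail.length = c.support.length - 1 := by
        cases c.support <;> simp
      omega
    omega
  · push_neg at h0
    obtain ⟨z, hz, hz0⟩ := h0
    have hlen : (c.rotate z hz).length = c.length := by
      have := (Walk.rotate_darts c z hz).perm.length_eq
      simpa [Walk.length_darts] using this
    have hc' := hc.rotate hz
    rw [← hlen]
    generalize hcc : c.rotate z hz = c' at hc'
    clear hlen hcc
    cases c' with
    | nil => exact absurd hc'.three_le_length (by simp)
    | @cons _ x _ h p =>
      have hzx : z ≠ x := (myG n).ne_of_adj h
      have hx0 : x.val ≠ 0 := fun hx => hzx (Fin.val_injective (hz0.trans hx.symm))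
      have hnd : p.support.Nodup := by
        have := hc'.support_nodup
        simpa [Walk.support_cons] using this
      have hch := chain2 p hz0 hnd hx0
      have hb := list_len_bound p.support hnd
        (insert z (univ.filter (fun w : Fin n => w.val ≠ 0 ∧ (w.val - 1) / 4 = (x.val - 1) / 4)))
        (by
          intro w hw
          by_cases hw0 : w.val = 0
          · have : w = z := Fin.val_injective (hw0.trans hz0.symm)
            rw [this]; exact Finset.mem_insert_self z _
          · simp only [Finset.mem_insert, mem_filter, mem_univ, true_and]
            exact Or.inr ⟨hw0, hch w hw hw0⟩)
      have h5 : (insert z (univ.filter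
          (fun w : Fin n => w.val ≠ 0 ∧ (w.val - 1) / 4 = (x.val - 1) / 4))).card ≤ 5 := by
        have := card_group (n := n) (k := (x.val - 1) / 4)
        calc _ ≤ _ + 1 := Finset.card_insert_le _ _
        _ ≤ 5 := by omega
      have hps : p.support.length = p.length + 1 := p.length_support
      simp only [Walk.length_cons]
      omega

end Stmt12

theorem stmt_12 (n q r : ℕ) (hn : 2 ≤ n) (hqr : n - 1 = 4 * q + r) (hr : r < 4) :
    ∃ G : SimpleGraph (Fin n),
      G.edgeSet.ncard = 10 * q + (r + 1).choose 2 ∧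
      ∀ (v : Fin n) (c : G.Walk v v), c.IsCycle → c.length % 4 ≠ 2 := by
  refine ⟨Stmt12.myG n, ?_, ?_⟩
  · have h2 := Stmt12.twice_card n q r hn hqr hr
    have hch : 2 * ((r + 1).choose 2) = r + r*r := by
      interval_cases r <;> decide
    have hcard : (Stmt12.myG n).edgeSet.ncard = (Stmt12.myG n).edgeFinset.card := by
      rw [Set.ncard_eq_toFinset_card']
      congr 1
    rw [hcard]
    omega
  · intro v c hcyc
    have h3 := hcyc.three_le_length
    have h5 := Stmt12.cycle_len c hcyc
    omega
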